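/- The Rauzy–Veech elementary step preserves the absence of connections. Let T be an interval exchange transformation on d ≥ 2 intervals with irreducible combinatorial data and no connections (in particular u_{d−1}(T) ≠ v_{d−1}(T)). Then the first-return map T̂ of T to the interval Î := [0, max(u_{d−1}(T), v_{d−1}(T))) is again an interval exchange transformation on d intervals with irreducible combinatorial data, and T̂ has no connections. -/

import Mathlib

open scoped Classical
open Set Filter MeasureTheory

namespace IETPaper

/-- An interval exchange transformation on `d` intervals: positive length data indexed by
an alphabet of `d` letters (here `Fin d`), together with irreducible combinatorial data
given by a pair of bijections (`pit` = top, `pib` = bottom, with values `0,…,d-1`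
corresponding to positions `1,…,d`). -/
structure IET (d : ℕ) where
  lam : Fin d → ℝ
  lam_pos : ∀ a, 0 < lam a
  pit : Fin d ≃ Fin d
  pib : Fin d ≃ Fin d
  irred : ∀ k : ℕ, 0 < k → k < d →
    Finset.univ.filter (fun a => (pit a : ℕ) < k) ≠
      Finset.univ.filter (fun a => (pib a : ℕ) < k)

namespace IET

variable {d : ℕ}

/-- Total length of the interval `I(T)`. -/
noncomputable def len (T : IET d) : ℝ := ∑ a, T.lam a

/-- The singularity data: `u k = Σ_{π_t(α) ≤ k} λ_α` (0-indexed: sum of the lengths of the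
first `k` top intervals). -/
noncomputable def upt (T : IET d) (k : ℕ) : ℝ :=
  ∑ a ∈ Finset.univ.filter (fun a => (T.pit a : ℕ) < k), T.lam a

/-- `v k`: the singularities of `T⁻¹`. -/
noncomputable def vpt (T : IET d) (k : ℕ) : ℝ :=
  ∑ a ∈ Finset.univ.filter (fun a => (T.pib a : ℕ) < k), T.lam a

/-- Left endpoint of the top interval `I_α^t(T)`. -/
noncomputable def lept (T : IET d) (a : Fin d) : ℝ := T.upt (T.pit a)

/-- Right endpoint of the top interval `I_α^t(T)`. -/
noncomputable def rept (T : IET d) (a : Fin d) : ℝ := T.upt (T.pit a) + T.lam a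

/-- Left endpoint of the bottom interval `I_α^b(T)`. -/
noncomputable def lepb (T : IET d) (a : Fin d) : ℝ := T.vpt (T.pib a)

/-- Right endpoint of the bottom interval `I_α^b(T)`. -/
noncomputable def repb (T : IET d) (a : Fin d) : ℝ := T.vpt (T.pib a) + T.lam a

/-- The top interval `I_α^t(T)` (half-open). -/
def topI (T : IET d) (a : Fin d) : Set ℝ := Set.Ico (T.lept a) (T.rept a)

/-- The bottom interval `I_α^b(T)` (half-open). -/
def botI (T : IET d) (a : Fin d) : Set ℝ := Set.Ico (T.lepb a) (T.repb a)

/-- The interval `I(T) = [0, len T)`. -/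
def domain (T : IET d) : Set ℝ := Set.Ico 0 T.len

/-- The interval exchange map: on each `I_α^t(T)` it is the translation taking `I_α^t(T)`
onto `I_α^b(T)` (and the identity outside the top intervals, as junk value). -/
noncomputable def toFun (T : IET d) (x : ℝ) : ℝ :=
  if h : ∃ a : Fin d, x ∈ T.topI a then x - T.lept h.choose + T.lepb h.choose
  else x

/-- `T` has a connection: a triple `(u_k, v_l, m)` with `0 < k, l < d`, `m ≥ 0`
and `T^m (v_l) = u_k`. -/
def HasConnection (T : IET d) : Prop :=
  ∃ k l m : ℕ, 0 < k ∧ k < d ∧ 0 < l ∧ l < d ∧ T.toFun^[m] (T.vpt l) = T.upt k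

def NoConnections (T : IET d) : Prop := ¬ T.HasConnection

/-- The permutation `σ` on `𝒜 × {L, R}` (here `L = false`, `R = true`) whose cycles
correspond to the marked points of the suspended translation surface. -/
noncomputable def bnext (T : IET d) (c : Fin d × Bool) : Fin d × Bool :=
  if c.2 then
    if h : (T.pit c.1 : ℕ) + 1 < d then (T.pit.symm ⟨(T.pit c.1 : ℕ) + 1, h⟩, false)
    else (T.pib.symm ⟨d - 1, by have := c.1.pos; omega⟩, true)
  else
    if _h : 0 < (T.pib c.1 : ℕ) then
      (T.pib.symm ⟨(T.pib c.1 : ℕ) - 1, by have := (T.pib c.1).isLt; omega⟩, true)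
    else (T.pit.symm ⟨0, c.1.pos⟩, false)

/-- The cycle (orbit under `σ`) of an element of `𝒜 × {L, R}`. -/
noncomputable def cycleOf (T : IET d) (c : Fin d × Bool) : Finset (Fin d × Bool) :=
  Finset.univ.filter (fun c' => ∃ n : ℕ, T.bnext^[n] c = c')

/-- Number of cycles of `σ`, i.e. number of marked points `s`. -/
noncomputable def numCycles (T : IET d) : ℕ :=
  Set.ncard {O : Set (Fin d × Bool) | ∃ c, O = {c' | ∃ n : ℕ, T.bnext^[n] c = c'}}

/-- The antisymmetric matrix `Ω(π)`. -/
noncomputable def Omega (T : IET d) : Matrix (Fin d) (Fin d) ℝ :=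
  fun a b =>
    if (T.pit a : ℕ) < (T.pit b : ℕ) ∧ (T.pib b : ℕ) < (T.pib a : ℕ) then 1
    else if (T.pit b : ℕ) < (T.pit a : ℕ) ∧ (T.pib a : ℕ) < (T.pib b : ℕ) then -1
    else 0

/-- The genus `g`: half the rank of `Ω(π)`. -/
noncomputable def genus (T : IET d) : ℕ := T.Omega.rank / 2

end IET

/-- Sign `ε(c)`: `+1` on right endpoints, `-1` on left endpoints. -/
noncomputable def bsign {d : ℕ} (c : Fin d × Bool) : ℝ := if c.2 then 1 else -1

/-- The component of the boundary operator corresponding to the cycle of `c`, applied to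
an assignment `f` of (one-sided limit) values to the elements of `𝒜 × {L, R}`. -/
noncomputable def cycleSum {d : ℕ} (T : IET d) (f : Fin d × Bool → ℝ) (c : Fin d × Bool) : ℝ :=
  ∑ c' ∈ T.cycleOf c, bsign c' * f c'

/-- `∂ f = 0` : all cycle components of the boundary operator vanish. -/
def BoundaryZero {d : ℕ} (T : IET d) (f : Fin d × Bool → ℝ) : Prop :=
  ∀ c, cycleSum T f c = 0

/-- First return time of `x` to `J` under `f` (junk if it does not return). -/
noncomputable def firstReturnTime (f : ℝ → ℝ) (J : Set ℝ) (x : ℝ) : ℕ :=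
  sInf {n : ℕ | 0 < n ∧ f^[n] x ∈ J}

/-- First return map of `f` to `J`. -/
noncomputable def firstReturnMap (f : ℝ → ℝ) (J : Set ℝ) (x : ℝ) : ℝ :=
  f^[firstReturnTime f J x] x

/-- The Rauzy–Veech tower over an i.e.t. `T` with no connections: the sequence `T(n)` of
i.e.t.'s produced by the Rauzy–Veech algorithm (`T(n+1)` is the first-return map of `T(n)`
to `I(n+1) = [0, max (u_{d-1}(T(n)), v_{d-1}(T(n))))`), together with the Kontsevich–Zorich
cocycle matrices `B(m,n)` with their defining properties. -/
structure RVTower (d : ℕ) (T : IET d) where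
  iet : ℕ → IET d
  iet_zero : iet 0 = T
  len_succ : ∀ n, (iet (n+1)).len = max ((iet n).upt (d-1)) ((iet n).vpt (d-1))
  step : ∀ n, ∃ F : Finset ℝ, ∀ x ∈ (iet (n+1)).domain, x ∉ F →
    (iet (n+1)).toFun x = firstReturnMap (iet n).toFun (iet (n+1)).domain x
  B : ℕ → ℕ → Matrix (Fin d) (Fin d) ℕ
  B_self : ∀ m, B m m = 1
  B_cocycle : ∀ m n p, m ≤ n → n ≤ p → B m p = B n p * B m n
  B_lam : ∀ m n, m ≤ n → ∀ b, (iet m).lam b = ∑ a, (B m n a b : ℝ) * (iet n).lam a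
  B_visits : ∀ m n, m ≤ n → ∀ a b : Fin d, ∃ x ∈ (iet n).topI a,
    (B m n a b : ℕ) = Nat.card {j : ℕ |
      j < firstReturnTime (iet m).toFun (iet n).domain x ∧ (iet m).toFun^[j] x ∈ (iet m).topI b}

namespace RVTower

variable {d : ℕ} {T : IET d}

/-- The accelerated (Yoccoz) times: `n_0 = 0` and `n_{k+1}` is the smallest `n` such that
all entries of `B(n_k, n)` are positive. -/
noncomputable def acc (tw : RVTower d T) : ℕ → ℕ
  | 0 => 0
  | k + 1 => sInf {n : ℕ | ∀ a b : Fin d, 0 < tw.B (RVTower.acc tw k) n a b}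

end RVTower

/-- The norm of a (Kontsevich–Zorich) matrix: sum of (absolute values of) its entries. -/
noncomputable def mnorm {d : ℕ} (M : Matrix (Fin d) (Fin d) ℕ) : ℝ := ∑ a, ∑ b, (M a b : ℝ)

/-- Norm of a vector in `Γ(T(n)) ≅ ℝ^𝒜`. -/
noncomputable def vnorm {d : ℕ} (v : Fin d → ℝ) : ℝ := ∑ a, |v a|

/-- Action of a Kontsevich–Zorich matrix on `Γ ≅ ℝ^𝒜` (the special Birkhoff sum operator
on piecewise constant functions). -/
noncomputable def bAct {d : ℕ} (M : Matrix (Fin d) (Fin d) ℕ) (v : Fin d → ℝ) : Fin d → ℝ :=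
  fun a => ∑ b, (M a b : ℝ) * v b

/-- The special Birkhoff sum `S(m,n)φ` evaluated at `x ∈ I(n)`. -/
noncomputable def sBS {d : ℕ} {T : IET d} (tw : RVTower d T) (m n : ℕ) (φ : ℝ → ℝ) (x : ℝ) :
    ℝ :=
  ∑ j ∈ Finset.range (firstReturnTime (tw.iet m).toFun (tw.iet n).domain x),
    φ ((tw.iet m).toFun^[j] x)

/-- `Γ₀(T(n))`: vectors (piecewise constant functions) with zero average. -/
def Gamma0 {d : ℕ} {T : IET d} (tw : RVTower d T) (n : ℕ) : Set (Fin d → ℝ) :=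
  {v | ∑ a, v a * (tw.iet n).lam a = 0}

/-- Condition (a) of the Diophantine class `DC(η, θ, σ)`. -/
def CondA {d : ℕ} {T : IET d} (tw : RVTower d T) (η : ℝ) : Prop :=
  ∀ ε > (0:ℝ), ∃ C > (0:ℝ), ∀ k : ℕ,
    mnorm (tw.B (tw.acc k) (tw.acc (k+1))) ≤ C * mnorm (tw.B 0 (tw.acc k)) ^ (η + ε)

/-- Condition (b) of the Diophantine class `DC(η, θ, σ)`. -/
def CondB {d : ℕ} {T : IET d} (tw : RVTower d T) (θ : ℝ) : Prop :=
  ∃ C > (0:ℝ), ∀ k : ℕ, ∀ v ∈ Gamma0 tw 0,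
    vnorm (bAct (tw.B 0 (tw.acc k)) v) ≤ C * mnorm (tw.B 0 (tw.acc k)) ^ (1 - θ) * vnorm v

/-- The stable space `Γ_s(T(n_p))` (as a set). -/
def stableSet {d : ℕ} {T : IET d} (tw : RVTower d T) (σ : ℝ) (p : ℕ) : Set (Fin d → ℝ) :=
  {v | ∃ C : ℝ, ∀ q, p ≤ q →
    vnorm (bAct (tw.B (tw.acc p) (tw.acc q)) v) ≤ C * mnorm (tw.B (tw.acc p) (tw.acc q)) ^ (-σ)}

/-- The quotient norm on `Γ(T(n_p))/Γ_s(T(n_p))`. -/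
noncomputable def qnorm {d : ℕ} {T : IET d} (tw : RVTower d T) (σ : ℝ) (p : ℕ)
    (v : Fin d → ℝ) : ℝ :=
  sInf {r : ℝ | ∃ χ ∈ stableSet tw σ p, r = vnorm (v - χ)}

/-- Condition (c) of the Diophantine class `DC(η, θ, σ)`. -/
def CondC {d : ℕ} {T : IET d} (tw : RVTower d T) (σ : ℝ) : Prop :=
  (∀ k l, k ≤ l → ∀ v ∈ stableSet tw σ k,
    bAct (tw.B (tw.acc k) (tw.acc l)) v ∈ stableSet tw σ l) ∧
  (∀ ε > (0:ℝ), ∃ C > (0:ℝ), ∀ k l, k ≤ l → ∀ v ∈ stableSet tw σ k,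
    vnorm (bAct (tw.B (tw.acc k) (tw.acc l)) v) ≤ C * mnorm (tw.B 0 (tw.acc l)) ^ ε * vnorm v) ∧
  (∀ ε > (0:ℝ), ∃ C > (0:ℝ), ∀ k l, k ≤ l → ∀ v : Fin d → ℝ,
    qnorm tw σ l (bAct (tw.B (tw.acc k) (tw.acc l)) v) ≤
      C * mnorm (tw.B 0 (tw.acc l)) ^ ε * qnorm tw σ k v)

/-- Dimension `μ` of the stable space `Γ_s(T)`. -/
noncomputable def stableDim {d : ℕ} {T : IET d} (tw : RVTower d T) (σ : ℝ) : ℕ :=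
  Module.finrank ℝ (Submodule.span ℝ (stableSet tw σ 0))

/-- Condition (d) of the Diophantine class `DC(η, θ, σ)`. -/
def CondD {d : ℕ} {T : IET d} (tw : RVTower d T) (σ : ℝ) : Prop :=
  stableDim tw σ < T.genus →
    ∀ v : Fin d → ℝ, v ∉ Submodule.span ℝ (stableSet tw σ 0) →
      ∃ c > (0:ℝ), ∃ᶠ n in atTop, c ≤ vnorm (bAct (tw.B 0 n) v)

/-- The Diophantine class `DC(η, θ, σ)`. -/
def DC {d : ℕ} {T : IET d} (tw : RVTower d T) (η θ σ : ℝ) : Prop :=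
  CondA tw η ∧ CondB tw θ ∧ CondC tw σ ∧ CondD tw σ

/-- One-sided limit values at the endpoints of the continuity intervals of the `i`-th
derivative of a family `Φ` (where `Φ a` represents the restriction of the function to
`cl (I_a^t(T))`). -/
noncomputable def sideVal {d : ℕ} (T : IET d) (Φ : Fin d → ℝ → ℝ) (i : ℕ)
    (c : Fin d × Bool) : ℝ :=
  iteratedDerivWithin i (Φ c.1) (Set.Icc (T.lept c.1) (T.rept c.1))
    (if c.2 then T.rept c.1 else T.lept c.1)

/-- Membership in `C^{r+BV}(⊔_α I_α^t(T))`: `C^r` on each closed continuity interval, with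
`r`-th derivative of bounded variation. -/
def MemCrBV {d : ℕ} (T : IET d) (r : ℕ) (Φ : Fin d → ℝ → ℝ) : Prop :=
  (∀ a, ContDiffOn ℝ r (Φ a) (Set.Icc (T.lept a) (T.rept a))) ∧
  (∀ a, BoundedVariationOn
    (iteratedDerivWithin r (Φ a) (Set.Icc (T.lept a) (T.rept a)))
    (Set.Icc (T.lept a) (T.rept a)))

/-- Membership in `C^{r+BV}_∂(⊔_α I_α^t(T))`: moreover `∂ D^i Φ = 0` for `0 ≤ i < r`. -/
def MemCrBVD {d : ℕ} (T : IET d) (r : ℕ) (Φ : Fin d → ℝ → ℝ) : Prop :=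
  MemCrBV T r Φ ∧ ∀ i < r, BoundaryZero T (sideVal T Φ i)

/-- Sup of `|f|` over `s`. -/
noncomputable def supAbsOn (f : ℝ → ℝ) (s : Set ℝ) : ℝ := sSup ((fun x => |f x|) '' s)

/-- The `C^{r+BV}` norm. -/
noncomputable def crbvNorm {d : ℕ} (T : IET d) (r : ℕ) (Φ : Fin d → ℝ → ℝ) : ℝ :=
  (∑ i ∈ Finset.range (r+1), ∑ a,
    supAbsOn (iteratedDerivWithin i (Φ a) (Set.Icc (T.lept a) (T.rept a)))
      (Set.Icc (T.lept a) (T.rept a))) +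
  ∑ a, (eVariationOn (iteratedDerivWithin r (Φ a) (Set.Icc (T.lept a) (T.rept a)))
      (Set.Icc (T.lept a) (T.rept a))).toReal

/-- The `C^k` norm on `C^k(cl I(T))`. -/
noncomputable def ckNorm {d : ℕ} (T : IET d) (k : ℕ) (u : ℝ → ℝ) : ℝ :=
  ∑ i ∈ Finset.range (k+1),
    supAbsOn (iteratedDerivWithin i u (Set.Icc 0 T.len)) (Set.Icc 0 T.len)

/-- Value of the `i`-th derivative of a piecewise polynomial (element of `Γ(r)`) at the
endpoints of the continuity intervals. -/
noncomputable def polySideVal {d : ℕ} (T : IET d) (P : Fin d → Polynomial ℝ) (i : ℕ)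
    (c : Fin d × Bool) : ℝ :=
  (Polynomial.derivative^[i] (P c.1)).eval (if c.2 then T.rept c.1 else T.lept c.1)

/-- Membership in `Γ_∂(r)`: piecewise polynomial of degree `< r` with `∂ D^i = 0` for
all `0 ≤ i < r`. -/
def MemGammaDel {d : ℕ} (T : IET d) (r : ℕ) (P : Fin d → Polynomial ℝ) : Prop :=
  (∀ a, (P a).degree < (r : ℕ)) ∧ ∀ i < r, BoundaryZero T (polySideVal T P i)

/-- Membership in `Γ_T(r)`: piecewise polynomials of degree `< r` of the form
`ψ ∘ T - ψ` with `ψ ∈ C^{r-1}(cl I(T))`. -/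
def MemGammaT {d : ℕ} (T : IET d) (r : ℕ) (P : Fin d → Polynomial ℝ) : Prop :=
  (∀ a, (P a).degree < (r : ℕ)) ∧
  ∃ ψ : ℝ → ℝ, ContDiffOn ℝ (r-1 : ℕ) ψ (Set.Icc 0 T.len) ∧
    ∀ a, ∀ x ∈ T.topI a, (P a).eval x = ψ (T.toFun x) - ψ x

/-- `Γ_∂(T) = Γ(T) ∩ ker ∂` as a submodule of `Γ(T) ≅ ℝ^𝒜`. -/
noncomputable def gammaDelVec {d : ℕ} (T : IET d) : Submodule ℝ (Fin d → ℝ) where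
  carrier := {v | ∀ c, cycleSum T (fun c' => v c'.1) c = 0}
  add_mem' := by
    intro v w hv hw
    intro c
    have h1 := hv c
    have h2 := hw c
    simp only [cycleSum, Pi.add_apply, mul_add, Finset.sum_add_distrib] at *
    rw [h1, h2]; ring
  zero_mem' := by
    intro c
    simp [cycleSum]
  smul_mem' := by
    intro t v hv c
    have h1 := hv c
    simp only [cycleSum, Pi.smul_apply, smul_eq_mul] at *
    calc ∑ c' ∈ T.cycleOf c, bsign c' * (t * v c'.1)
        = t * ∑ c' ∈ T.cycleOf c, bsign c' * v c'.1 := by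
          rw [Finset.mul_sum]; exact Finset.sum_congr rfl (fun c' _ => by ring)
      _ = 0 := by rw [h1, mul_zero]

/-- The operator norm of the restriction of `B(n_p, n_q)` to `Γ₀(T(n_p))`. -/
noncomputable def restNorm {d : ℕ} {T : IET d} (tw : RVTower d T) (p q : ℕ) : ℝ :=
  sSup {r : ℝ | ∃ v ∈ Gamma0 tw (tw.acc p), vnorm v ≤ 1 ∧
    r = vnorm (bAct (tw.B (tw.acc p) (tw.acc q)) v)}

/-- The `BV` norm (total variation) of a function on `⊔_α I_α^t(T)`. -/
noncomputable def bvNorm {d : ℕ} (T : IET d) (φ : ℝ → ℝ) : ℝ :=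
  ∑ a, (eVariationOn φ (T.topI a)).toReal


section Aux

namespace IET

variable {d : ℕ}

lemma upt_nonneg (T : IET d) (k : ℕ) : 0 ≤ T.upt k :=
  Finset.sum_nonneg fun a _ => (T.lam_pos a).le

lemma upt_mono (T : IET d) {k l : ℕ} (h : k ≤ l) : T.upt k ≤ T.upt l :=
  Finset.sum_le_sum_of_subset_of_nonneg
    (by intro a ha
        simp only [Finset.mem_filter, Finset.mem_univ, true_and] at *
        omega)
    (fun a _ _ => (T.lam_pos a).le)

lemma upt_zero (T : IET d) : T.upt 0 = 0 := by
  simp [upt]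

lemma upt_of_d_le (T : IET d) {k : ℕ} (h : d ≤ k) : T.upt k = T.len := by
  unfold upt len
  rw [Finset.filter_true_of_mem fun a _ => lt_of_lt_of_le (T.pit a).isLt h]

lemma upt_succ (T : IET d) (k : ℕ) (hk : k < d) :
    T.upt (k+1) = T.upt k + T.lam (T.pit.symm ⟨k, hk⟩) := by
  have hins : Finset.univ.filter (fun a => (T.pit a : ℕ) < k + 1) =
      insert (T.pit.symm ⟨k, hk⟩) (Finset.univ.filter (fun a => (T.pit a : ℕ) < k)) := by
    ext a
    simp only [Finset.mem_filter, Finset.mem_insert, Finset.mem_univ, true_and]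
    constructor
    · intro h
      rcases Nat.lt_succ_iff_lt_or_eq.mp h with h | h
      · exact Or.inr h
      · exact Or.inl ((Equiv.eq_symm_apply _).mpr (Fin.ext h))
    · rintro (h | h)
      · subst h; simp
      · exact Nat.lt_succ_of_lt h
  have hnot : T.pit.symm ⟨k, hk⟩ ∉ Finset.univ.filter (fun a => (T.pit a : ℕ) < k) := by
    simp
  rw [upt, hins, Finset.sum_insert hnot, upt, add_comm]

lemma upt_lt_len (T : IET d) {k : ℕ} (hk : k < d) : T.upt k < T.len := by
  have h1 : T.upt (k+1) ≤ T.len := by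
    rcases le_or_gt d (k+1) with h | h
    · exact (T.upt_of_d_le h).le
    · rw [← T.upt_of_d_le (le_refl d)]; exact T.upt_mono h.le
  have := T.upt_succ k hk
  have := T.lam_pos (T.pit.symm ⟨k, hk⟩)
  linarith

lemma rept_eq (T : IET d) (a : Fin d) : T.rept a = T.upt ((T.pit a : ℕ) + 1) := by
  rw [rept, T.upt_succ (T.pit a) (T.pit a).isLt]
  congr 2
  simp [Fin.eta]

lemma topI_unique (T : IET d) {a b : Fin d} {x : ℝ}
    (ha : x ∈ T.topI a) (hb : x ∈ T.topI b) : a = b := by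
  by_contra hne
  have key : ∀ a b : Fin d, (T.pit a : ℕ) < (T.pit b : ℕ) →
      x ∈ T.topI a → x ∈ T.topI b → False := by
    intro a b hlt ha hb
    have h1 : x < T.upt ((T.pit a : ℕ) + 1) := by
      rw [← T.rept_eq]; exact ha.2
    have h2 : T.upt ((T.pit b : ℕ)) ≤ x := hb.1
    have := T.upt_mono (show (T.pit a : ℕ) + 1 ≤ (T.pit b : ℕ) from hlt)
    linarith
  have hne' : (T.pit a : ℕ) ≠ (T.pit b : ℕ) := by
    intro h
    exact hne (T.pit.injective (Fin.ext h))
  rcases lt_or_gt_of_ne hne' with h | h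
  · exact key a b h ha hb
  · exact key b a h hb ha

lemma exists_mem_topI (T : IET d) (hd : 0 < d) {x : ℝ} (hx : x ∈ T.domain) :
    ∃ a, x ∈ T.topI a := by
  classical
  set S := (Finset.range d).filter (fun k => T.upt k ≤ x) with hS
  have h0 : (0 : ℕ) ∈ S := by
    simp [hS, hd, T.upt_zero, hx.1]
  have hSne : S.Nonempty := ⟨0, h0⟩
  set k := S.max' hSne with hk
  have hkS : k ∈ S := S.max'_mem hSne
  have hkd : k < d := (Finset.mem_filter.mp hkS).1 |> Finset.mem_range.mp
  have hkle : T.upt k ≤ x := (Finset.mem_filter.mp hkS).2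
  have hlt : x < T.upt (k+1) := by
    by_contra h
    push_neg at h
    rcases lt_or_ge (k+1) d with h1 | h1
    · have : k + 1 ∈ S := by simp [hS, h1, h]
      have := S.le_max' _ this
      omega
    · rw [T.upt_of_d_le h1] at h
      exact absurd hx.2 (not_lt.mpr h)
  refine ⟨T.pit.symm ⟨k, hkd⟩, ?_, ?_⟩
  · show T.upt _ ≤ x
    simpa using hkle
  · rw [rept_eq]
    simpa using hlt

lemma toFun_eq (T : IET d) {a : Fin d} {x : ℝ} (h : x ∈ T.topI a) :
    T.toFun x = x - T.lept a + T.lepb a := by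
  have hex : ∃ b, x ∈ T.topI b := ⟨a, h⟩
  rw [toFun, dif_pos hex]
  rw [T.topI_unique hex.choose_spec h]

/-- transpose -/
def tr (T : IET d) : IET d where
  lam := T.lam
  lam_pos := T.lam_pos
  pit := T.pib
  pib := T.pit
  irred := fun k h1 h2 => (T.irred k h1 h2).symm

lemma tr_upt (T : IET d) (k : ℕ) : T.tr.upt k = T.vpt k := rfl

lemma vpt_nonneg (T : IET d) (k : ℕ) : 0 ≤ T.vpt k := T.tr.upt_nonneg k

lemma vpt_mono (T : IET d) {k l : ℕ} (h : k ≤ l) : T.vpt k ≤ T.vpt l := T.tr.upt_mono h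

lemma vpt_zero (T : IET d) : T.vpt 0 = 0 := T.tr.upt_zero

lemma vpt_of_d_le (T : IET d) {k : ℕ} (h : d ≤ k) : T.vpt k = T.len := T.tr.upt_of_d_le h

lemma vpt_succ (T : IET d) (k : ℕ) (hk : k < d) :
    T.vpt (k+1) = T.vpt k + T.lam (T.pib.symm ⟨k, hk⟩) := T.tr.upt_succ k hk

lemma vpt_lt_len (T : IET d) {k : ℕ} (hk : k < d) : T.vpt k < T.len := T.tr.upt_lt_len hk

end IET

end Aux


section Aux2

lemma frm_one {f : ℝ → ℝ} {J : Set ℝ} {x : ℝ} (h1 : f x ∈ J) :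
    firstReturnMap f J x = f x := by
  have hmem : 1 ∈ {n : ℕ | 0 < n ∧ f^[n] x ∈ J} := by
    simp [h1]
  have h : firstReturnTime f J x = 1 := by
    have hle := Nat.sInf_le hmem
    have hge : 1 ≤ firstReturnTime f J x :=
      le_csInf ⟨1, hmem⟩ (fun n hn => hn.1)
    exact le_antisymm hle hge
  rw [firstReturnMap, h, Function.iterate_one]

lemma frm_two {f : ℝ → ℝ} {J : Set ℝ} {x : ℝ} (h1 : f x ∉ J) (h2 : f (f x) ∈ J) :
    firstReturnMap f J x = f (f x) := by
  have hmem : 2 ∈ {n : ℕ | 0 < n ∧ f^[n] x ∈ J} := by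
    constructor
    · norm_num
    · show f^[2] x ∈ J
      rw [show f^[2] x = f (f x) by rw [Function.iterate_succ_apply', Function.iterate_one]]
      exact h2
  have h : firstReturnTime f J x = 2 := by
    have hle := Nat.sInf_le hmem
    have hge : 2 ≤ firstReturnTime f J x := by
      apply le_csInf ⟨2, hmem⟩
      intro n hn
      rcases hn with ⟨hn0, hnJ⟩
      by_contra h
      interval_cases n
      · rw [Function.iterate_one] at hnJ
        exact h1 hnJ
    exact le_antisymm hle hge
  rw [firstReturnMap, h]
  rw [Function.iterate_succ_apply', Function.iterate_one]

lemma orbit_aux {f g : ℝ → ℝ} {J : Set ℝ}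
    (H : ∀ x ∈ J, ∃ r : ℕ, g x = f^[r] x ∧ g x ∈ J) :
    ∀ m : ℕ, ∀ x ∈ J, ∃ M : ℕ, g^[m] x = f^[M] x ∧ g^[m] x ∈ J := by
  intro m
  induction m with
  | zero => intro x hx; exact ⟨0, rfl, hx⟩
  | succ m ih =>
    intro x hx
    obtain ⟨r, hr, hmem⟩ := H x hx
    obtain ⟨M, hM, hM2⟩ := ih (g x) hmem
    refine ⟨M + r, ?_, ?_⟩
    · rw [Function.iterate_succ_apply, hM, hr, ← Function.iterate_add_apply]
    · rw [Function.iterate_succ_apply]; exact hM2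

/-- forward map of the cyclic permutation -/
def cycF (d p : ℕ) (hp : p + 1 < d) (j : Fin d) : Fin d :=
  if _h1 : (j : ℕ) ≤ p then j
  else if _h2 : (j : ℕ) = d - 1 then ⟨p+1, hp⟩
  else ⟨(j : ℕ) + 1, by have := j.isLt; omega⟩

/-- backward map of the cyclic permutation -/
def cycG (d p : ℕ) (hp : p + 1 < d) (j : Fin d) : Fin d :=
  if _h1 : (j : ℕ) ≤ p then j
  else if _h2 : (j : ℕ) = p + 1 then ⟨d-1, by omega⟩
  else ⟨(j : ℕ) - 1, by have := j.isLt; omega⟩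

lemma cycF_val {d p : ℕ} (hp : p + 1 < d) (j : Fin d) :
    (cycF d p hp j : ℕ) =
      if (j : ℕ) ≤ p then (j : ℕ) else if (j : ℕ) = d - 1 then p+1 else (j : ℕ) + 1 := by
  rw [cycF]; split_ifs <;> rfl

lemma cycG_val {d p : ℕ} (hp : p + 1 < d) (j : Fin d) :
    (cycG d p hp j : ℕ) =
      if (j : ℕ) ≤ p then (j : ℕ) else if (j : ℕ) = p + 1 then d - 1 else (j : ℕ) - 1 := by
  rw [cycG]; split_ifs <;> rfl

/-- The cyclic permutation of `Fin d` sending `d-1` to `p+1` and shifting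
`p+1, …, d-2` up by one; identity on `0, …, p`. -/
def cyc (d p : ℕ) (hp : p + 1 < d) : Fin d ≃ Fin d where
  toFun := cycF d p hp
  invFun := cycG d p hp
  left_inv := by
    intro j
    have hj := j.isLt
    apply Fin.ext
    rw [cycG_val, cycF_val]
    split_ifs <;> omega
  right_inv := by
    intro j
    have hj := j.isLt
    apply Fin.ext
    rw [cycF_val, cycG_val]
    split_ifs <;> omega

lemma cyc_val {d p : ℕ} (hp : p + 1 < d) (j : Fin d) :
    (cyc d p hp j : ℕ) =
      if (j : ℕ) ≤ p then (j : ℕ) else if (j : ℕ) = d - 1 then p+1 else (j : ℕ) + 1 :=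
  cycF_val hp j

lemma cyc_le {d p : ℕ} (hp : p + 1 < d) {j : Fin d} (h : (j : ℕ) ≤ p) :
    cyc d p hp j = j := by
  apply Fin.ext
  rw [cyc_val hp]
  simp [h]

lemma cyc_last {d p : ℕ} (hp : p + 1 < d) {j : Fin d} (h : (j : ℕ) = d - 1) :
    (cyc d p hp j : ℕ) = p + 1 := by
  rw [cyc_val hp]
  split_ifs <;> omega

lemma cyc_mid {d p : ℕ} (hp : p + 1 < d) {j : Fin d} (h1 : p < (j : ℕ)) (h2 : (j : ℕ) < d - 1) :
    (cyc d p hp j : ℕ) = (j : ℕ) + 1 := by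
  rw [cyc_val hp]
  have ha : ¬ (j : ℕ) ≤ p := by omega
  have hb : ¬ (j : ℕ) = d - 1 := by omega
  simp [ha, hb]

lemma cyc_symm_le {d p : ℕ} (hp : p + 1 < d) {j : Fin d} (h : (j : ℕ) ≤ p) :
    (cyc d p hp).symm j = j := by
  apply (cyc d p hp).injective
  rw [Equiv.apply_symm_apply]
  exact (cyc_le hp h).symm

lemma cyc_lt_iff {d p l : ℕ} (hp : p + 1 < d) (hl : l ≤ p + 1) (j : Fin d) :
    ((cyc d p hp j : ℕ) < l ↔ (j : ℕ) < l) := by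
  have hj := j.isLt
  rcases le_or_gt (j : ℕ) p with h | h
  · rw [cyc_le hp h]
  · rcases eq_or_lt_of_le (show (j:ℕ) ≤ d - 1 by omega) with h2 | h2
    · rw [cyc_last hp h2]
      omega
    · rw [cyc_mid hp h h2]
      omega

end Aux2


section StepTop

open IET

set_option maxHeartbeats 1000000 in
lemma step_top {d : ℕ} (hd : 2 ≤ d) (T : IET d) (hT : T.NoConnections)
    (hlt : T.upt (d-1) < T.vpt (d-1)) :
    ∃ T' : IET d,
      T'.len = max (T.upt (d-1)) (T.vpt (d-1)) ∧
      (∃ F : Finset ℝ, ∀ x ∈ T'.domain, x ∉ F →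
        T'.toFun x = firstReturnMap T.toFun T'.domain x) ∧
      T'.NoConnections := by
  classical
  have hd1 : d - 1 < d := by omega
  have hd0 : 0 < d - 1 := by omega
  set αt := T.pit.symm ⟨d-1, hd1⟩ with hαt
  set αb := T.pib.symm ⟨d-1, hd1⟩ with hαb
  have hpitαt : (T.pit αt : ℕ) = d - 1 := by rw [hαt]; simp
  have hpibαb : (T.pib αb : ℕ) = d - 1 := by rw [hαb]; simp
  have ht : ∀ a, ((T.pit a : ℕ) < d - 1) ↔ a ≠ αt := by
    intro a
    have hlt' := (T.pit a).isLt
    constructor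
    · intro h heq
      rw [heq, hpitαt] at h
      omega
    · intro h
      rcases Nat.lt_or_ge (T.pit a : ℕ) (d-1) with h2 | h2
      · exact h2
      · exfalso
        apply h
        rw [hαt, Equiv.eq_symm_apply]
        exact Fin.ext (show (T.pit a : ℕ) = d - 1 by omega)
  have hb : ∀ a, ((T.pib a : ℕ) < d - 1) ↔ a ≠ αb := by
    intro a
    have hlt' := (T.pib a).isLt
    constructor
    · intro h heq
      rw [heq, hpibαb] at h
      omega
    · intro h
      rcases Nat.lt_or_ge (T.pib a : ℕ) (d-1) with h2 | h2
      · exact h2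
      · exfalso
        apply h
        rw [hαb, Equiv.eq_symm_apply]
        exact Fin.ext (show (T.pib a : ℕ) = d - 1 by omega)
  have hne : αt ≠ αb := by
    intro h
    apply T.irred (d-1) hd0 hd1
    ext a
    simp only [Finset.mem_filter, Finset.mem_univ, true_and]
    rw [ht a, hb a, h]
  have hlamt : T.upt (d-1) + T.lam αt = T.len := by
    have h1 := T.upt_succ (d-1) hd1
    rw [show d - 1 + 1 = d by omega, T.upt_of_d_le (le_refl d)] at h1
    rw [hαt]
    linarith
  have hlamb : T.vpt (d-1) + T.lam αb = T.len := by
    have h1 := T.vpt_succ (d-1) hd1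
    rw [show d - 1 + 1 = d by omega, T.vpt_of_d_le (le_refl d)] at h1
    rw [hαb]
    linarith
  have hlab : T.lam αb < T.lam αt := by linarith
  have hposb := T.lam_pos αb
  have hpost := T.lam_pos αt
  set p := (T.pib αt : ℕ) with hp
  have hpd1 : p < d - 1 := (hb αt).mpr hne
  have hpd : p + 1 < d := by omega
  -- the new length data
  set lam' : Fin d → ℝ := fun a => if a = αt then T.lam αt - T.lam αb else T.lam a with hlam'
  have hpos' : ∀ a, 0 < lam' a := by
    intro a
    rw [hlam']
    by_cases h : a = αt <;> simp [h, T.lam_pos a]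
    linarith
  have hlamt' : lam' αt = T.lam αt - T.lam αb := by rw [hlam']; simp
  have hlamo : ∀ a, a ≠ αt → lam' a = T.lam a := by
    intro a h; rw [hlam']; simp [h]
  -- irreducibility of the new data
  have hirr' : ∀ k : ℕ, 0 < k → k < d →
      Finset.univ.filter (fun a => (T.pit a : ℕ) < k) ≠
        Finset.univ.filter (fun a => ((T.pib.trans (cyc d p hpd)) a : ℕ) < k) := by
    intro k hk0 hkd heq
    rcases le_or_gt k (p+1) with hk | hk
    · apply T.irred k hk0 hkd
      rw [heq]
      ext a
      simp only [Finset.mem_filter, Finset.mem_univ, true_and]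
      simp only [Equiv.trans_apply]
      exact cyc_lt_iff hpd hk (T.pib a)
    · have h1 : αt ∈ Finset.univ.filter
          (fun a => ((T.pib.trans (cyc d p hpd)) a : ℕ) < k) := by
        simp only [Finset.mem_filter, Finset.mem_univ, true_and]
        simp only [Equiv.trans_apply]
        rw [cyc_le hpd (le_of_eq hp.symm)]
        omega
      have h2 : αt ∉ Finset.univ.filter (fun a => (T.pit a : ℕ) < k) := by
        simp only [Finset.mem_filter, Finset.mem_univ, true_and, hpitαt]
        omega
      rw [heq] at h2
      exact h2 h1
  obtain ⟨T', hT'lam, hT'pit, hT'pib⟩ :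
      ∃ T' : IET d, T'.lam = lam' ∧ T'.pit = T.pit ∧ T'.pib = T.pib.trans (cyc d p hpd) :=
    ⟨⟨lam', hpos', T.pit, T.pib.trans (cyc d p hpd), hirr'⟩, rfl, rfl, rfl⟩
  -- singularity data of T'
  have hupt' : ∀ k : ℕ, k ≤ d - 1 → T'.upt k = T.upt k := by
    intro k hk
    rw [IET.upt, IET.upt, hT'pit]
    apply Finset.sum_congr rfl
    intro a ha
    simp only [Finset.mem_filter, Finset.mem_univ, true_and] at ha
    rw [hT'lam]
    exact hlamo a ((ht a).mp (by omega))
  have hlen' : T'.len = T.vpt (d-1) := by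
    have e1 : T'.len = ∑ a ∈ Finset.univ.erase αt, lam' a + lam' αt := by
      rw [IET.len, hT'lam, Finset.sum_erase_add _ _ (Finset.mem_univ αt)]
    have e2 : T.len = ∑ a ∈ Finset.univ.erase αt, T.lam a + T.lam αt := by
      rw [IET.len, Finset.sum_erase_add _ _ (Finset.mem_univ αt)]
    have e3 : ∑ a ∈ Finset.univ.erase αt, lam' a = ∑ a ∈ Finset.univ.erase αt, T.lam a :=
      Finset.sum_congr rfl fun a ha => hlamo a (Finset.ne_of_mem_erase ha)
    rw [e1, e3, hlamt']
    linarith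
  have hvpt'lo : ∀ l : ℕ, l ≤ p → T'.vpt l = T.vpt l := by
    intro l hl
    rw [IET.vpt, IET.vpt, hT'pib]
    have hfe : Finset.univ.filter (fun a => ((T.pib.trans (cyc d p hpd)) a : ℕ) < l) =
        Finset.univ.filter (fun a => (T.pib a : ℕ) < l) := by
      ext a
      simp only [Finset.mem_filter, Finset.mem_univ, true_and]
      simp only [Equiv.trans_apply]
      exact cyc_lt_iff hpd (by omega) (T.pib a)
    rw [hfe]
    apply Finset.sum_congr rfl
    intro a ha
    simp only [Finset.mem_filter, Finset.mem_univ, true_and] at ha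
    rw [hT'lam]
    apply hlamo
    intro h
    rw [h, ← hp] at ha
    omega
  have hpfin : (⟨p, by omega⟩ : Fin d) = T.pib αt := Fin.ext rfl
  have hvpt'p1 : T'.vpt (p+1) = T.vpt p + (T.lam αt - T.lam αb) := by
    have h1 := T'.vpt_succ p (by omega)
    have h2 : T'.pib.symm ⟨p, by omega⟩ = αt := by
      rw [hT'pib, Equiv.symm_trans_apply, cyc_symm_le hpd (by simp), hpfin,
        Equiv.symm_apply_apply]
    rw [h2, hT'lam, hlamt', hvpt'lo p le_rfl] at h1
    exact h1
  have hvpt'hi : ∀ l : ℕ, p + 2 ≤ l → l ≤ d → T'.vpt l = T.vpt (l-1) := by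
    intro l hl1 hl2
    rw [IET.vpt, IET.vpt, hT'pib]
    have hset : Finset.univ.filter (fun a => ((T.pib.trans (cyc d p hpd)) a : ℕ) < l) =
        insert αb (Finset.univ.filter (fun a => (T.pib a : ℕ) < l - 1)) := by
      ext a
      simp only [Finset.mem_filter, Finset.mem_insert, Finset.mem_univ, true_and]
      simp only [Equiv.trans_apply]
      rw [cyc_val hpd]
      have hja := (T.pib a).isLt
      have hab : a = αb ↔ (T.pib a : ℕ) = d - 1 := by
        rw [hαb, Equiv.eq_symm_apply, Fin.ext_iff]
      rw [hab]
      split_ifs <;> omega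
    have hnb : αb ∉ Finset.univ.filter (fun a => (T.pib a : ℕ) < l - 1) := by
      simp only [Finset.mem_filter, Finset.mem_univ, true_and, hpibαb]
      omega
    rw [hset, Finset.sum_insert hnb]
    have hmemt : αt ∈ Finset.univ.filter (fun a => (T.pib a : ℕ) < l - 1) := by
      simp only [Finset.mem_filter, Finset.mem_univ, true_and, ← hp]
      omega
    have e1 : ∑ a ∈ Finset.univ.filter (fun a => (T.pib a : ℕ) < l - 1), T'.lam a =
        ∑ a ∈ (Finset.univ.filter (fun a => (T.pib a : ℕ) < l - 1)).erase αt, T'.lam a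
          + T'.lam αt := by
      rw [Finset.sum_erase_add _ _ hmemt]
    have e2 : ∑ a ∈ Finset.univ.filter (fun a => (T.pib a : ℕ) < l - 1), T.lam a =
        ∑ a ∈ (Finset.univ.filter (fun a => (T.pib a : ℕ) < l - 1)).erase αt, T.lam a
          + T.lam αt := (Finset.sum_erase_add _ _ hmemt).symm
    have e3 : ∑ a ∈ (Finset.univ.filter (fun a => (T.pib a : ℕ) < l - 1)).erase αt, T'.lam a =
        ∑ a ∈ (Finset.univ.filter (fun a => (T.pib a : ℕ) < l - 1)).erase αt, T.lam a := by
      apply Finset.sum_congr rfl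
      intro a ha
      rw [hT'lam]
      exact hlamo a (Finset.ne_of_mem_erase ha)
    have e4 : T'.lam αb = T.lam αb := by rw [hT'lam]; exact hlamo αb (Ne.symm hne)
    have e5 : T'.lam αt = T.lam αt - T.lam αb := by rw [hT'lam]; exact hlamt'
    rw [e4, e1, e3, e5, e2]
    ring
  -- useful bounds
  have hrepbαt : T.vpt p + T.lam αt = T.vpt (p+1) := by
    have h1 := T.vpt_succ p (by omega)
    have h2 : T.pib.symm ⟨p, by omega⟩ = αt := by
      rw [hpfin, Equiv.symm_apply_apply]
    rw [h2] at h1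
    linarith
  have hreple : T.vpt (p+1) ≤ T.vpt (d-1) := T.vpt_mono (by omega)
  have hvp0 : 0 ≤ T.vpt p := T.vpt_nonneg p
  -- the key pointwise dichotomy
  have key : ∀ x ∈ T'.domain,
      (T.toFun x ∈ T'.domain ∧ T'.toFun x = T.toFun x) ∨
      (T.toFun x ∉ T'.domain ∧ T.toFun (T.toFun x) ∈ T'.domain ∧
        T'.toFun x = T.toFun (T.toFun x)) := by
    intro x hx
    obtain ⟨a, ha⟩ := T'.exists_mem_topI (by omega) hx
    have htf' := T'.toFun_eq ha
    rw [IET.topI, Set.mem_Ico] at ha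
    obtain ⟨ha1, ha2⟩ := ha
    rw [IET.domain, Set.mem_Ico] at hx
    have hx0 : 0 ≤ x := hx.1
    have hxv : x < T.vpt (d-1) := by rw [← hlen']; exact hx.2
    have hmemdom : ∀ y : ℝ, 0 ≤ y → y < T.vpt (d-1) → y ∈ T'.domain := by
      intro y h1 h2
      rw [IET.domain, Set.mem_Ico, hlen']
      exact ⟨h1, h2⟩
    by_cases hat : a = αt
    · subst hat
      left
      have hlept' : T'.lept αt = T.upt (d-1) := by
        rw [IET.lept, hT'pit, hpitαt]
        exact hupt' _ le_rfl
      have hlam'a : T'.lam αt = T.lam αt - T.lam αb := by rw [hT'lam]; exact hlamt'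
      have hxlo : T.upt (d-1) ≤ x := by rw [← hlept']; exact ha1
      have hxhi : x < T.upt (d-1) + (T.lam αt - T.lam αb) := by
        rw [IET.rept, ← IET.lept, hlept', hlam'a] at ha2
        exact ha2
      have hxmem : x ∈ T.topI αt := by
        rw [IET.topI, Set.mem_Ico, IET.lept, IET.rept, hpitαt]
        exact ⟨hxlo, by linarith⟩
      have htf := T.toFun_eq hxmem
      have hTx : T.toFun x = x - T.upt (d-1) + T.vpt p := by
        rw [htf, IET.lepb, IET.lept, hpitαt, ← hp]
      have hlepb' : T'.lepb αt = T.vpt p := by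
        rw [IET.lepb, hT'pib]
        have hcv : ((T.pib.trans (cyc d p hpd)) αt : ℕ) = p := by
          simp only [Equiv.trans_apply]
          rw [cyc_le hpd (le_of_eq hp.symm), ← hp]
        rw [hcv]
        exact hvpt'lo p le_rfl
      constructor
      · rw [hTx]
        apply hmemdom
        · linarith
        · linarith
      · rw [htf', hTx, hlepb', hlept']
    · by_cases hab : a = αb
      · subst hab
        right
        have hlept' : T'.lept αb = T.lept αb := by
          rw [IET.lept, IET.lept, hT'pit]
          exact hupt' _ (by have := (T.pit αb).isLt; omega)
        have hlam'a : T'.lam αb = T.lam αb := by rw [hT'lam]; exact hlamo _ hat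
        have hxlo : T.lept αb ≤ x := by rw [← hlept']; exact ha1
        have hxhi : x < T.lept αb + T.lam αb := by
          rw [IET.rept, ← IET.lept, hlept', hlam'a] at ha2
          exact ha2
        have hxmem : x ∈ T.topI αb := by
          rw [IET.topI, Set.mem_Ico, IET.rept, ← IET.lept]
          exact ⟨hxlo, hxhi⟩
        have htf := T.toFun_eq hxmem
        have hTx : T.toFun x = x - T.lept αb + T.vpt (d-1) := by
          rw [htf, IET.lepb, hpibαb]
        have hTxlo : T.vpt (d-1) ≤ T.toFun x := by rw [hTx]; linarith
        have hTxhi : T.toFun x < T.len := by rw [hTx]; linarith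
        have hTxmem : T.toFun x ∈ T.topI αt := by
          rw [IET.topI, Set.mem_Ico, IET.lept, IET.rept, hpitαt]
          exact ⟨by linarith, by linarith⟩
        have htf2 := T.toFun_eq hTxmem
        have hT2x : T.toFun (T.toFun x) = T.toFun x - T.upt (d-1) + T.vpt p := by
          rw [htf2, IET.lepb, IET.lept, hpitαt, ← hp]
        refine ⟨?_, ?_, ?_⟩
        · rw [IET.domain, Set.mem_Ico, hlen']
          intro hc
          linarith [hc.2]
        · rw [hT2x]
          apply hmemdom
          · linarith
          · have h5 : T.toFun x - T.upt (d-1) < T.lam αt := by linarith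
            have h6 : T.toFun x - T.upt (d-1) + T.vpt p < T.lam αt + T.vpt p := by linarith
            linarith [hrepbαt, hreple]
        · have hlepb' : T'.lepb αb = T.vpt p + (T.lam αt - T.lam αb) := by
            rw [IET.lepb, hT'pib]
            have hv : ((T.pib.trans (cyc d p hpd)) αb : ℕ) = p + 1 := by
              simp only [Equiv.trans_apply]
              exact cyc_last hpd hpibαb
            rw [hv]
            exact hvpt'p1
          rw [htf', hT2x, hTx, hlepb', hlept']
          have h7 : T.vpt (d-1) - T.upt (d-1) = T.lam αt - T.lam αb := by linarith
          linarith
      · left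
        have hpit_lt : (T.pit a : ℕ) < d - 1 := (ht a).mpr hat
        have hpib_lt : (T.pib a : ℕ) < d - 1 := (hb a).mpr hab
        have hlept' : T'.lept a = T.lept a := by
          rw [IET.lept, IET.lept, hT'pit]
          exact hupt' _ (by omega)
        have hlam'a : T'.lam a = T.lam a := by rw [hT'lam]; exact hlamo _ hat
        have hxlo : T.lept a ≤ x := by rw [← hlept']; exact ha1
        have hxhi : x < T.lept a + T.lam a := by
          rw [IET.rept, ← IET.lept, hlept', hlam'a] at ha2
          exact ha2
        have hxmem : x ∈ T.topI a := by
          rw [IET.topI, Set.mem_Ico, IET.rept, ← IET.lept]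
          exact ⟨hxlo, hxhi⟩
        have htf := T.toFun_eq hxmem
        set j := (T.pib a : ℕ) with hj
        have hvsucc : T.vpt (j+1) = T.vpt j + T.lam a := by
          have h1 := T.vpt_succ j (by omega)
          have h2 : T.pib.symm ⟨j, by omega⟩ = a := by
            have hfe : (⟨j, by omega⟩ : Fin d) = T.pib a := Fin.ext rfl
            rw [hfe, Equiv.symm_apply_apply]
          rw [h2] at h1
          exact h1
        have hTx : T.toFun x = x - T.lept a + T.vpt j := by
          rw [htf, IET.lepb, ← hj]
        constructor
        · rw [hTx]
          apply hmemdom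
          · linarith [T.vpt_nonneg j]
          · have h6 : T.vpt (j+1) ≤ T.vpt (d-1) := T.vpt_mono (by omega)
            linarith
        · have hjp : j ≠ p := by
            intro h
            apply hat
            have hfe : T.pib a = T.pib αt := Fin.ext (by rw [← hj, ← hp]; exact h)
            exact T.pib.injective hfe
          have hlepb' : T'.lepb a = T.vpt j := by
            rw [IET.lepb, hT'pib]
            rcases lt_or_gt_of_ne hjp with hlt2 | hgt2
            · have hv : ((T.pib.trans (cyc d p hpd)) a : ℕ) = j := by
                simp only [Equiv.trans_apply]
                rw [cyc_le hpd (by omega)]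
              rw [hv]
              exact hvpt'lo j (by omega)
            · have hv : ((T.pib.trans (cyc d p hpd)) a : ℕ) = j + 1 := by
                simp only [Equiv.trans_apply]
                rw [cyc_mid hpd (by omega) (by omega)]
              rw [hv, hvpt'hi (j+1) (by omega) (by omega)]
              simp
          rw [htf', hTx, hlepb', hlept']
  -- conclusion
  refine ⟨T', ?_, ?_, ?_⟩
  · rw [hlen', max_eq_right hlt.le]
  · refine ⟨∅, fun x hx _ => ?_⟩
    rcases key x hx with ⟨h1, h2⟩ | ⟨h1, h2, h3⟩
    · rw [frm_one h1, h2]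
    · rw [frm_two h1 h2, h3]
  · rintro ⟨k, l, m, hk0, hkd, hl0, hld, hconn⟩
    have Hhyp : ∀ x ∈ T'.domain, ∃ r : ℕ, T'.toFun x = T.toFun^[r] x ∧ T'.toFun x ∈ T'.domain := by
      intro x hx
      rcases key x hx with ⟨h1, h2⟩ | ⟨h1, h2, h3⟩
      · exact ⟨1, by simpa using h2, by rw [h2]; exact h1⟩
      · refine ⟨2, ?_, by rw [h3]; exact h2⟩
        rw [h3]
        rw [show T.toFun^[2] x = T.toFun (T.toFun x) by
          rw [Function.iterate_succ_apply', Function.iterate_one]]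
    have hvmem : T'.vpt l ∈ T'.domain := by
      rw [IET.domain, Set.mem_Ico]
      exact ⟨T'.vpt_nonneg l, T'.vpt_lt_len hld⟩
    obtain ⟨M, hM, _⟩ := orbit_aux Hhyp m (T'.vpt l) hvmem
    rw [hM, hupt' k (by omega)] at hconn
    apply hT
    rcases le_or_gt l p with hl | hl
    · rw [hvpt'lo l hl] at hconn
      exact ⟨k, l, M, hk0, hkd, hl0, hld, hconn⟩
    · rcases eq_or_lt_of_le (show p + 1 ≤ l by omega) with he | he
      · rw [← he, hvpt'p1] at hconn
        have hvmem2 : T.vpt (d-1) ∈ T.topI αt := by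
          rw [IET.topI, Set.mem_Ico, IET.lept, IET.rept, hpitαt]
          exact ⟨hlt.le, by linarith [T.vpt_lt_len (show d-1 < d by omega), hlamt]⟩
        have hL5 : T.toFun (T.vpt (d-1)) = T.vpt p + (T.lam αt - T.lam αb) := by
          rw [T.toFun_eq hvmem2, IET.lepb, IET.lept, hpitαt, ← hp]
          linarith
        rw [← hL5] at hconn
        refine ⟨k, d-1, M+1, hk0, hkd, hd0, hd1, ?_⟩
        rw [Function.iterate_succ_apply]
        exact hconn
      · rw [hvpt'hi l (by omega) (by omega)] at hconn
        exact ⟨k, l-1, M, hk0, hkd, by omega, by omega, hconn⟩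

end StepTop


section StepBot

open IET

set_option maxHeartbeats 1000000 in
lemma step_bot {d : ℕ} (hd : 2 ≤ d) (T : IET d) (hT : T.NoConnections)
    (hgt : T.vpt (d-1) < T.upt (d-1)) :
    ∃ T' : IET d,
      T'.len = max (T.upt (d-1)) (T.vpt (d-1)) ∧
      (∃ F : Finset ℝ, ∀ x ∈ T'.domain, x ∉ F →
        T'.toFun x = firstReturnMap T.toFun T'.domain x) ∧
      T'.NoConnections := by
  classical
  have hd1 : d - 1 < d := by omega
  have hd0 : 0 < d - 1 := by omega
  set αt := T.pit.symm ⟨d-1, hd1⟩ with hαt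
  set αb := T.pib.symm ⟨d-1, hd1⟩ with hαb
  have hpitαt : (T.pit αt : ℕ) = d - 1 := by rw [hαt]; simp
  have hpibαb : (T.pib αb : ℕ) = d - 1 := by rw [hαb]; simp
  have ht : ∀ a, ((T.pit a : ℕ) < d - 1) ↔ a ≠ αt := by
    intro a
    have hlt' := (T.pit a).isLt
    constructor
    · intro h heq
      rw [heq, hpitαt] at h
      omega
    · intro h
      rcases Nat.lt_or_ge (T.pit a : ℕ) (d-1) with h2 | h2
      · exact h2
      · exfalso
        apply h
        rw [hαt, Equiv.eq_symm_apply]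
        exact Fin.ext (show (T.pit a : ℕ) = d - 1 by omega)
  have hb : ∀ a, ((T.pib a : ℕ) < d - 1) ↔ a ≠ αb := by
    intro a
    have hlt' := (T.pib a).isLt
    constructor
    · intro h heq
      rw [heq, hpibαb] at h
      omega
    · intro h
      rcases Nat.lt_or_ge (T.pib a : ℕ) (d-1) with h2 | h2
      · exact h2
      · exfalso
        apply h
        rw [hαb, Equiv.eq_symm_apply]
        exact Fin.ext (show (T.pib a : ℕ) = d - 1 by omega)
  have hne : αt ≠ αb := by
    intro h
    apply T.irred (d-1) hd0 hd1
    ext a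
    simp only [Finset.mem_filter, Finset.mem_univ, true_and]
    rw [ht a, hb a, h]
  have hlamt : T.upt (d-1) + T.lam αt = T.len := by
    have h1 := T.upt_succ (d-1) hd1
    rw [show d - 1 + 1 = d by omega, T.upt_of_d_le (le_refl d)] at h1
    rw [hαt]
    linarith
  have hlamb : T.vpt (d-1) + T.lam αb = T.len := by
    have h1 := T.vpt_succ (d-1) hd1
    rw [show d - 1 + 1 = d by omega, T.vpt_of_d_le (le_refl d)] at h1
    rw [hαb]
    linarith
  have hlab : T.lam αt < T.lam αb := by linarith
  have hposb := T.lam_pos αb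
  have hpost := T.lam_pos αt
  set q := (T.pit αb : ℕ) with hq
  have hqd1 : q < d - 1 := (ht αb).mpr (Ne.symm hne)
  have hqd : q + 1 < d := by omega
  set p := (T.pib αt : ℕ) with hp
  have hpd1 : p < d - 1 := (hb αt).mpr hne
  -- the new length data
  set lam' : Fin d → ℝ := fun a => if a = αb then T.lam αb - T.lam αt else T.lam a with hlam'
  have hpos' : ∀ a, 0 < lam' a := by
    intro a
    rw [hlam']
    by_cases h : a = αb <;> simp [h, T.lam_pos a]
    linarith
  have hlamb' : lam' αb = T.lam αb - T.lam αt := by rw [hlam']; simp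
  have hlamo : ∀ a, a ≠ αb → lam' a = T.lam a := by
    intro a h; rw [hlam']; simp [h]
  -- irreducibility of the new data
  have hirr' : ∀ k : ℕ, 0 < k → k < d →
      Finset.univ.filter (fun a => ((T.pit.trans (cyc d q hqd)) a : ℕ) < k) ≠
        Finset.univ.filter (fun a => (T.pib a : ℕ) < k) := by
    intro k hk0 hkd heq
    rcases le_or_gt k (q+1) with hk | hk
    · apply T.irred k hk0 hkd
      rw [← heq]
      ext a
      simp only [Finset.mem_filter, Finset.mem_univ, true_and]
      simp only [Equiv.trans_apply]
      exact (cyc_lt_iff hqd hk (T.pit a)).symm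
    · have h1 : αb ∈ Finset.univ.filter
          (fun a => ((T.pit.trans (cyc d q hqd)) a : ℕ) < k) := by
        simp only [Finset.mem_filter, Finset.mem_univ, true_and]
        simp only [Equiv.trans_apply]
        rw [cyc_le hqd (le_of_eq hq.symm)]
        omega
      have h2 : αb ∉ Finset.univ.filter (fun a => (T.pib a : ℕ) < k) := by
        simp only [Finset.mem_filter, Finset.mem_univ, true_and, hpibαb]
        omega
      rw [heq] at h1
      exact h2 h1
  obtain ⟨T', hT'lam, hT'pit, hT'pib⟩ :
      ∃ T' : IET d, T'.lam = lam' ∧ T'.pit = T.pit.trans (cyc d q hqd) ∧ T'.pib = T.pib :=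
    ⟨⟨lam', hpos', T.pit.trans (cyc d q hqd), T.pib, hirr'⟩, rfl, rfl, rfl⟩
  -- singularity data of T'
  have hvpt' : ∀ l : ℕ, l ≤ d - 1 → T'.vpt l = T.vpt l := by
    intro l hl
    rw [IET.vpt, IET.vpt, hT'pib]
    apply Finset.sum_congr rfl
    intro a ha
    simp only [Finset.mem_filter, Finset.mem_univ, true_and] at ha
    rw [hT'lam]
    exact hlamo a ((hb a).mp (by omega))
  have hlen' : T'.len = T.upt (d-1) := by
    have e1 : T'.len = ∑ a ∈ Finset.univ.erase αb, lam' a + lam' αb := by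
      rw [IET.len, hT'lam, Finset.sum_erase_add _ _ (Finset.mem_univ αb)]
    have e2 : T.len = ∑ a ∈ Finset.univ.erase αb, T.lam a + T.lam αb := by
      rw [IET.len, Finset.sum_erase_add _ _ (Finset.mem_univ αb)]
    have e3 : ∑ a ∈ Finset.univ.erase αb, lam' a = ∑ a ∈ Finset.univ.erase αb, T.lam a :=
      Finset.sum_congr rfl fun a ha => hlamo a (Finset.ne_of_mem_erase ha)
    rw [e1, e3, hlamb']
    linarith
  have hupt'lo : ∀ k : ℕ, k ≤ q → T'.upt k = T.upt k := by
    intro k hk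
    rw [IET.upt, IET.upt, hT'pit]
    have hfe : Finset.univ.filter (fun a => ((T.pit.trans (cyc d q hqd)) a : ℕ) < k) =
        Finset.univ.filter (fun a => (T.pit a : ℕ) < k) := by
      ext a
      simp only [Finset.mem_filter, Finset.mem_univ, true_and]
      simp only [Equiv.trans_apply]
      exact cyc_lt_iff hqd (by omega) (T.pit a)
    rw [hfe]
    apply Finset.sum_congr rfl
    intro a ha
    simp only [Finset.mem_filter, Finset.mem_univ, true_and] at ha
    rw [hT'lam]
    apply hlamo
    intro h
    rw [h, ← hq] at ha
    omega
  have hqfin : (⟨q, by omega⟩ : Fin d) = T.pit αb := Fin.ext rfl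
  have hupt'q1 : T'.upt (q+1) = T.upt q + (T.lam αb - T.lam αt) := by
    have h1 := T'.upt_succ q (by omega)
    have h2 : T'.pit.symm ⟨q, by omega⟩ = αb := by
      rw [hT'pit, Equiv.symm_trans_apply, cyc_symm_le hqd (by simp), hqfin,
        Equiv.symm_apply_apply]
    rw [h2, hT'lam, hlamb', hupt'lo q le_rfl] at h1
    exact h1
  have hupt'hi : ∀ k : ℕ, q + 2 ≤ k → k ≤ d → T'.upt k = T.upt (k-1) := by
    intro k hk1 hk2
    rw [IET.upt, IET.upt, hT'pit]
    have hset : Finset.univ.filter (fun a => ((T.pit.trans (cyc d q hqd)) a : ℕ) < k) =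
        insert αt (Finset.univ.filter (fun a => (T.pit a : ℕ) < k - 1)) := by
      ext a
      simp only [Finset.mem_filter, Finset.mem_insert, Finset.mem_univ, true_and]
      simp only [Equiv.trans_apply]
      rw [cyc_val hqd]
      have hja := (T.pit a).isLt
      have hab : a = αt ↔ (T.pit a : ℕ) = d - 1 := by
        rw [hαt, Equiv.eq_symm_apply, Fin.ext_iff]
      rw [hab]
      split_ifs <;> omega
    have hnb : αt ∉ Finset.univ.filter (fun a => (T.pit a : ℕ) < k - 1) := by
      simp only [Finset.mem_filter, Finset.mem_univ, true_and, hpitαt]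
      omega
    rw [hset, Finset.sum_insert hnb]
    have hmemb : αb ∈ Finset.univ.filter (fun a => (T.pit a : ℕ) < k - 1) := by
      simp only [Finset.mem_filter, Finset.mem_univ, true_and, ← hq]
      omega
    have e1 : ∑ a ∈ Finset.univ.filter (fun a => (T.pit a : ℕ) < k - 1), T'.lam a =
        ∑ a ∈ (Finset.univ.filter (fun a => (T.pit a : ℕ) < k - 1)).erase αb, T'.lam a
          + T'.lam αb := by
      rw [Finset.sum_erase_add _ _ hmemb]
    have e2 : ∑ a ∈ Finset.univ.filter (fun a => (T.pit a : ℕ) < k - 1), T.lam a =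
        ∑ a ∈ (Finset.univ.filter (fun a => (T.pit a : ℕ) < k - 1)).erase αb, T.lam a
          + T.lam αb := (Finset.sum_erase_add _ _ hmemb).symm
    have e3 : ∑ a ∈ (Finset.univ.filter (fun a => (T.pit a : ℕ) < k - 1)).erase αb, T'.lam a =
        ∑ a ∈ (Finset.univ.filter (fun a => (T.pit a : ℕ) < k - 1)).erase αb, T.lam a := by
      apply Finset.sum_congr rfl
      intro a ha
      rw [hT'lam]
      exact hlamo a (Finset.ne_of_mem_erase ha)
    have e4 : T'.lam αt = T.lam αt := by rw [hT'lam]; exact hlamo αt hne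
    have e5 : T'.lam αb = T.lam αb - T.lam αt := by rw [hT'lam]; exact hlamb'
    rw [e4, e1, e3, e5, e2]
    ring
  -- useful bounds
  have hvsuccp : T.vpt p + T.lam αt = T.vpt (p+1) := by
    have h1 := T.vpt_succ p (by omega)
    have h2 : T.pib.symm ⟨p, by omega⟩ = αt := by
      rw [show (⟨p, by omega⟩ : Fin d) = T.pib αt from Fin.ext rfl, Equiv.symm_apply_apply]
    rw [h2] at h1
    linarith
  have hreple : T.vpt (p+1) ≤ T.vpt (d-1) := T.vpt_mono (by omega)
  have hvp0 : 0 ≤ T.vpt p := T.vpt_nonneg p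
  have huq0 : 0 ≤ T.upt q := T.upt_nonneg q
  have hreptαb : T.upt q + T.lam αb = T.upt (q+1) := by
    have h1 := T.upt_succ q (by omega)
    have h2 : T.pit.symm ⟨q, by omega⟩ = αb := by
      rw [hqfin, Equiv.symm_apply_apply]
    rw [h2] at h1
    linarith
  -- the key pointwise dichotomy
  have key : ∀ x ∈ T'.domain,
      (T.toFun x ∈ T'.domain ∧ T'.toFun x = T.toFun x) ∨
      (T.toFun x ∉ T'.domain ∧ T.toFun (T.toFun x) ∈ T'.domain ∧
        T'.toFun x = T.toFun (T.toFun x)) := by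
    intro x hx
    obtain ⟨a, ha⟩ := T'.exists_mem_topI (by omega) hx
    have htf' := T'.toFun_eq ha
    rw [IET.topI, Set.mem_Ico] at ha
    obtain ⟨ha1, ha2⟩ := ha
    rw [IET.domain, Set.mem_Ico] at hx
    have hx0 : 0 ≤ x := hx.1
    have hxu : x < T.upt (d-1) := by rw [← hlen']; exact hx.2
    have hmemdom : ∀ y : ℝ, 0 ≤ y → y < T.upt (d-1) → y ∈ T'.domain := by
      intro y h1 h2
      rw [IET.domain, Set.mem_Ico, hlen']
      exact ⟨h1, h2⟩
    by_cases hab : a = αb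
    · subst hab
      left
      have hlept' : T'.lept αb = T.upt q := by
        rw [IET.lept, hT'pit]
        have hv : ((T.pit.trans (cyc d q hqd)) αb : ℕ) = q := by
          simp only [Equiv.trans_apply]
          rw [cyc_le hqd (le_of_eq hq.symm), ← hq]
        rw [hv]
        exact hupt'lo q le_rfl
      have hlam'a : T'.lam αb = T.lam αb - T.lam αt := by rw [hT'lam]; exact hlamb'
      have hxlo : T.upt q ≤ x := by rw [← hlept']; exact ha1
      have hxhi : x < T.upt q + (T.lam αb - T.lam αt) := by
        rw [IET.rept, ← IET.lept, hlept', hlam'a] at ha2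
        exact ha2
      have hxmem : x ∈ T.topI αb := by
        rw [IET.topI, Set.mem_Ico, IET.lept, IET.rept, ← hq]
        exact ⟨hxlo, by linarith⟩
      have htf := T.toFun_eq hxmem
      have hTx : T.toFun x = x - T.upt q + T.vpt (d-1) := by
        rw [htf, IET.lepb, IET.lept, hpibαb, ← hq]
      have hlepb' : T'.lepb αb = T.vpt (d-1) := by
        rw [IET.lepb, hT'pib, hpibαb]
        exact hvpt' (d-1) le_rfl
      constructor
      · rw [hTx]
        apply hmemdom
        · linarith [T.vpt_nonneg (d-1)]
        · linarith
      · rw [htf', hTx, hlepb', hlept']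
    · by_cases hat : a = αt
      · subst hat
        right
        have hlept' : T'.lept αt = T.upt q + (T.lam αb - T.lam αt) := by
          rw [IET.lept, hT'pit]
          have hv : ((T.pit.trans (cyc d q hqd)) αt : ℕ) = q + 1 := by
            simp only [Equiv.trans_apply]
            exact cyc_last hqd hpitαt
          rw [hv]
          exact hupt'q1
        have hlam'a : T'.lam αt = T.lam αt := by rw [hT'lam]; exact hlamo _ hne
        have hxlo : T.upt q + (T.lam αb - T.lam αt) ≤ x := by rw [← hlept']; exact ha1
        have hxhi : x < T.upt q + T.lam αb := by
          rw [IET.rept, ← IET.lept, hlept', hlam'a] at ha2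
          linarith
        have hxmem : x ∈ T.topI αb := by
          rw [IET.topI, Set.mem_Ico, IET.lept, IET.rept, ← hq]
          exact ⟨by linarith, by linarith⟩
        have htf := T.toFun_eq hxmem
        have hTx : T.toFun x = x - T.upt q + T.vpt (d-1) := by
          rw [htf, IET.lepb, IET.lept, hpibαb, ← hq]
        have hTxlo : T.upt (d-1) ≤ T.toFun x := by rw [hTx]; linarith
        have hTxhi : T.toFun x < T.len := by rw [hTx]; linarith
        have hTxmem : T.toFun x ∈ T.topI αt := by
          rw [IET.topI, Set.mem_Ico, IET.lept, IET.rept, hpitαt]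
          exact ⟨by linarith, by linarith⟩
        have htf2 := T.toFun_eq hTxmem
        have hT2x : T.toFun (T.toFun x) = T.toFun x - T.upt (d-1) + T.vpt p := by
          rw [htf2, IET.lepb, IET.lept, hpitαt, ← hp]
        refine ⟨?_, ?_, ?_⟩
        · rw [IET.domain, Set.mem_Ico, hlen']
          intro hc
          linarith [hc.2]
        · rw [hT2x]
          apply hmemdom
          · linarith
          · have h5 : T.toFun x - T.upt (d-1) < T.lam αt := by linarith
            linarith [hreple, hvsuccp]
        · have hlepb' : T'.lepb αt = T.vpt p := by
            rw [IET.lepb, hT'pib, ← hp]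
            exact hvpt' p (by omega)
          rw [htf', hT2x, hTx, hlepb', hlept']
          have h7 : T.vpt (d-1) - T.upt (d-1) = T.lam αt - T.lam αb := by linarith
          linarith
      · -- generic letter
        left
        have hpit_lt : (T.pit a : ℕ) < d - 1 := (ht a).mpr hat
        have hpib_lt : (T.pib a : ℕ) < d - 1 := (hb a).mpr hab
        set j := (T.pit a : ℕ) with hj
        have hjq : j ≠ q := by
          intro h
          apply hab
          have hfe : T.pit a = T.pit αb := Fin.ext (by rw [← hj, ← hq]; exact h)
          exact T.pit.injective hfe
        have hlept' : T'.lept a = T.lept a := by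
          rw [IET.lept, IET.lept, hT'pit, ← hj]
          rcases lt_or_gt_of_ne hjq with hlt2 | hgt2
          · have hv : ((T.pit.trans (cyc d q hqd)) a : ℕ) = j := by
              simp only [Equiv.trans_apply]
              rw [cyc_le hqd (by omega)]
            rw [hv]
            exact hupt'lo j (by omega)
          · have hv : ((T.pit.trans (cyc d q hqd)) a : ℕ) = j + 1 := by
              simp only [Equiv.trans_apply]
              rw [cyc_mid hqd (by omega) (by omega)]
            rw [hv, hupt'hi (j+1) (by omega) (by omega)]
            simp
        have hlam'a : T'.lam a = T.lam a := by rw [hT'lam]; exact hlamo _ hab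
        have hxlo : T.lept a ≤ x := by rw [← hlept']; exact ha1
        have hxhi : x < T.lept a + T.lam a := by
          rw [IET.rept, ← IET.lept, hlept', hlam'a] at ha2
          exact ha2
        have hxmem : x ∈ T.topI a := by
          rw [IET.topI, Set.mem_Ico, IET.rept, ← IET.lept]
          exact ⟨hxlo, hxhi⟩
        have htf := T.toFun_eq hxmem
        set jb := (T.pib a : ℕ) with hjb
        have hvsucc : T.vpt (jb+1) = T.vpt jb + T.lam a := by
          have h1 := T.vpt_succ jb (by omega)
          have h2 : T.pib.symm ⟨jb, by omega⟩ = a := by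
            have hfe : (⟨jb, by omega⟩ : Fin d) = T.pib a := Fin.ext rfl
            rw [hfe, Equiv.symm_apply_apply]
          rw [h2] at h1
          exact h1
        have hTx : T.toFun x = x - T.lept a + T.vpt jb := by
          rw [htf, IET.lepb, ← hjb]
        constructor
        · rw [hTx]
          apply hmemdom
          · linarith [T.vpt_nonneg jb]
          · have h6 : T.vpt (jb+1) ≤ T.vpt (d-1) := T.vpt_mono (by omega)
            linarith
        · have hlepb' : T'.lepb a = T.vpt jb := by
            rw [IET.lepb, hT'pib, ← hjb]
            exact hvpt' jb (by omega)
          rw [htf', hTx, hlepb', hlept']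
  -- conclusion
  refine ⟨T', ?_, ?_, ?_⟩
  · rw [hlen', max_eq_left hgt.le]
  · refine ⟨∅, fun x hx _ => ?_⟩
    rcases key x hx with ⟨h1, h2⟩ | ⟨h1, h2, h3⟩
    · rw [frm_one h1, h2]
    · rw [frm_two h1 h2, h3]
  · rintro ⟨k, l, m, hk0, hkd, hl0, hld, hconn⟩
    have Hhyp : ∀ x ∈ T'.domain, ∃ r : ℕ, T'.toFun x = T.toFun^[r] x ∧ T'.toFun x ∈ T'.domain := by
      intro x hx
      rcases key x hx with ⟨h1, h2⟩ | ⟨h1, h2, h3⟩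
      · exact ⟨1, by simpa using h2, by rw [h2]; exact h1⟩
      · refine ⟨2, ?_, by rw [h3]; exact h2⟩
        rw [h3]
        rw [show T.toFun^[2] x = T.toFun (T.toFun x) by
          rw [Function.iterate_succ_apply', Function.iterate_one]]
    have hvmem : T'.vpt l ∈ T'.domain := by
      rw [IET.domain, Set.mem_Ico]
      exact ⟨T'.vpt_nonneg l, T'.vpt_lt_len hld⟩
    obtain ⟨M, hM, _⟩ := orbit_aux Hhyp m (T'.vpt l) hvmem
    rw [hM, hvpt' l (by omega)] at hconn
    apply hT
    rcases le_or_gt k q with hk | hk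
    · rw [hupt'lo k hk] at hconn
      exact ⟨k, l, M, hk0, hkd, hl0, hld, hconn⟩
    · rcases eq_or_lt_of_le (show q + 1 ≤ k by omega) with he | he
      · rw [← he, hupt'q1] at hconn
        have hymem : T.upt q + (T.lam αb - T.lam αt) ∈ T.topI αb := by
          rw [IET.topI, Set.mem_Ico, IET.lept, IET.rept, ← hq]
          exact ⟨by linarith, by linarith⟩
        have hy : T.toFun (T.upt q + (T.lam αb - T.lam αt)) = T.upt (d-1) := by
          rw [T.toFun_eq hymem, IET.lepb, hpibαb, IET.lept, ← hq]
          linarith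
        refine ⟨d-1, l, M+1, hd0, hd1, hl0, hld, ?_⟩
        rw [Function.iterate_succ_apply', hconn, hy]
      · rw [hupt'hi k (by omega) (by omega)] at hconn
        exact ⟨k-1, l, M, by omega, by omega, hl0, hld, hconn⟩

end StepBot


/-- **The Rauzy–Veech elementary step preserves the absence of connections.**  If `T` is an
i.e.t. on `d` intervals with irreducible combinatorial data and no connections, then the
first-return map of `T` to `Î = [0, max (u_{d-1}(T), v_{d-1}(T)))` is again an i.e.t. on
`d` intervals with irreducible combinatorial data (understood modulo finitely many points),
and it has no connections. -/
theorem rauzy_veech_step_no_connections {d : ℕ} (hd : 2 ≤ d) (T : IET d)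
    (hT : T.NoConnections) :
    ∃ T' : IET d,
      T'.len = max (T.upt (d-1)) (T.vpt (d-1)) ∧
      (∃ F : Finset ℝ, ∀ x ∈ T'.domain, x ∉ F →
        T'.toFun x = firstReturnMap T.toFun T'.domain x) ∧
      T'.NoConnections := by
  rcases lt_trichotomy (T.upt (d-1)) (T.vpt (d-1)) with h | h | h
  · exact step_top hd T hT h
  · exfalso
    apply hT
    exact ⟨d-1, d-1, 0, by omega, by omega, by omega, by omega, by simpa using h.symm⟩
  · exact step_bot hd T hT h

end IETPaper
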